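/- Let G = (V, E) be a finite digraph with state vertices V_α and control vertices having no in-edges, and suppose every state vertex is reachable from some control vertex (G is accessible). Fix an ordering β₁, ..., β_m of the control vertices. Define V*_{β_i} := {β_i} ∪ {reachable state vertices from β_i} and V_{β_i} := V*_{β_i} \ (V*_{β_1} ∪ ⋯ ∪ V*_{β_{i−1}}). Then the sets V_{β_1}, ..., V_{β_m} are pairwise disjoint, their union is all of V, and for each i, every vertex of V_{β_i} is reachable from β_i by a directed path lying entirely inside V_{β_i}. -/
import Mathlib


/-- Partitioning an accessible digraph by control nodes: with control vertices having
no in-edges and every state vertex reachable from some control vertex, the sets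
`V_{β i} := V*_{β i} \ (V*_{β 1} ∪ ⋯ ∪ V*_{β (i-1)})` (where `V*_{β i}` is the set of
vertices reachable from `β i`) are pairwise disjoint, cover all of `V`, and every
vertex of `V_{β i}` is reachable from `β i` by a directed path lying inside `V_{β i}`. -/
theorem stmt14 {V : Type*} [Fintype V] (E : V → V → Prop) (isCtrl : V → Prop)
    (m : ℕ) (β : Fin m → V) (hβinj : Function.Injective β)
    (hβrange : ∀ v, isCtrl v ↔ ∃ i, β i = v)
    (hnoIn : ∀ v w, isCtrl w → ¬ E v w)
    (hacc : ∀ v, ¬ isCtrl v → ∃ i, Relation.ReflTransGen E (β i) v) :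
    let Vstar : Fin m → Set V := fun i => {v | Relation.ReflTransGen E (β i) v}
    let Vb : Fin m → Set V := fun i => Vstar i \ ⋃ k : {k : Fin m // k < i}, Vstar k
    (∀ i j, i ≠ j → Disjoint (Vb i) (Vb j)) ∧
      (⋃ i, Vb i) = Set.univ ∧
      (∀ i, ∀ v ∈ Vb i,
        Relation.ReflTransGen (fun x y => E x y ∧ x ∈ Vb i ∧ y ∈ Vb i) (β i) v) := by
  intro Vstar Vb
  -- reaching a control vertex forces equality
  have hctrl : ∀ k i : Fin m, Relation.ReflTransGen E (β k) (β i) → k = i := by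
    intro k i h
    rcases h.cases_tail with h | ⟨w, _, hw⟩
    · exact hβinj h.symm
    · exact absurd hw (hnoIn _ _ ((hβrange (β i)).2 ⟨i, rfl⟩))
  have hmemVb : ∀ i v, v ∈ Vb i ↔ v ∈ Vstar i ∧ ∀ k, k < i → v ∉ Vstar k := by
    intro i v
    simp only [Vb, Set.mem_diff, Set.mem_iUnion, not_exists, Subtype.forall]
  have hdisj : ∀ i j, i ≠ j → Disjoint (Vb i) (Vb j) := by
    intro i j hij
    rw [Set.disjoint_left]
    intro v hvi hvj
    rcases lt_or_gt_of_ne hij with h | h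
    · exact ((hmemVb j v).1 hvj).2 i h ((hmemVb i v).1 hvi).1
    · exact ((hmemVb i v).1 hvi).2 j h ((hmemVb j v).1 hvj).1
  refine ⟨hdisj, ?_, ?_⟩
  · ext v
    simp only [Set.mem_iUnion, Set.mem_univ, iff_true]
    by_cases hv : isCtrl v
    · obtain ⟨i, rfl⟩ := (hβrange v).1 hv
      refine ⟨i, (hmemVb i _).2 ⟨Relation.ReflTransGen.refl, ?_⟩⟩
      intro k hk hmem
      exact absurd (hctrl k i hmem) (ne_of_lt hk)
    · obtain ⟨i, hi⟩ := hacc v hv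
      obtain ⟨j, hj, hjmin⟩ := wellFounded_lt.has_min {i : Fin m | v ∈ Vstar i} ⟨i, hi⟩
      refine ⟨j, (hmemVb j v).2 ⟨hj, ?_⟩⟩
      intro k hk hmem
      exact hjmin k hmem hk
  · intro i v hv
    have key : ∀ v, Relation.ReflTransGen E (β i) v → v ∈ Vb i →
        Relation.ReflTransGen (fun x y => E x y ∧ x ∈ Vb i ∧ y ∈ Vb i) (β i) v := by
      intro v hpath
      induction hpath with
      | refl => intro _; exact Relation.ReflTransGen.refl
      | tail hbw hwv ih =>
        rename_i w v'
        intro hv'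
        have hw : w ∈ Vb i := by
          refine (hmemVb i w).2 ⟨hbw, ?_⟩
          intro k hk hmem
          exact ((hmemVb i v').1 hv').2 k hk (hmem.tail hwv)
        exact (ih hw).tail ⟨hwv, hw, hv'⟩
    exact key v ((hmemVb i v).1 hv).1 hv
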